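/- Let $g : \mathbb{C} \to X$ ($X$ a complex Banach space) be holomorphic on an open set containing the closed Bernstein region $\overline{E_\rho} = \{(z + z^{-1})/2 : 1 \leq |z| \leq \rho\}$ for some $\rho > 1$, with $\sup_{w \in E_\rho} \|g(w)\|_X \leq M$. Then for every $n \geq 1$, the $n$-th Chebyshev coefficient $g_n := \int_{-1}^{1} g(t) T_n(t) \frac{dt}{\pi\sqrt{1-t^2}}$ satisfies $\|g_n\|_X \leq \sqrt{2}\, M \rho^{-n}$. -/

import Mathlib

open MeasureTheory

open Complex Set intervalIntegral in
/-- Decay of Chebyshev coefficients of a Banach-space-valued function holomorphic on a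
neighbourhood of the closed Bernstein region of parameter `ρ > 1`. -/
theorem stmt5 {X : Type*} [NormedAddCommGroup X] [NormedSpace ℂ X] [CompleteSpace X]
    (g : ℂ → X) (ρ M : ℝ) (hρ : 1 < ρ)
    (U : Set ℂ) (hU : IsOpen U)
    (hE : {w : ℂ | ∃ z : ℂ, 1 ≤ ‖z‖ ∧ ‖z‖ ≤ ρ ∧ w = (z + z⁻¹) / 2} ⊆ U)
    (hg : DifferentiableOn ℂ g U)
    (hM : ∀ w ∈ {w : ℂ | ∃ z : ℂ, 1 ≤ ‖z‖ ∧ ‖z‖ ≤ ρ ∧ w = (z + z⁻¹) / 2},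
      ‖g w‖ ≤ M)
    (n : ℕ) (hn : 1 ≤ n) :
    ‖∫ t in Set.Ioo (-1 : ℝ) 1,
        (Real.sqrt 2 * Real.cos (n * Real.arccos t) / (Real.pi * Real.sqrt (1 - t ^ 2))) •
          g (t : ℂ)‖ ≤ Real.sqrt 2 * M / ρ ^ n := by
  set E : Set ℂ :=
    {w : ℂ | ∃ z : ℂ, 1 ≤ ‖z‖ ∧ ‖z‖ ≤ ρ ∧ w = (z + z⁻¹) / 2} with hEdef
  have hρ0 : (0:ℝ) < ρ := lt_trans one_pos hρ
  have hρi0 : (0:ℝ) < ρ⁻¹ := inv_pos.mpr hρ0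
  have hρi1 : ρ⁻¹ ≤ 1 := by
    rw [inv_le_one_iff₀]; right; exact hρ.le
  -- membership lemma
  have mem_E : ∀ z : ℂ, ρ⁻¹ ≤ ‖z‖ → ‖z‖ ≤ ρ → (z + z⁻¹) / 2 ∈ E := by
    intro z h1 h2
    have hz0 : z ≠ 0 := by
      intro h0; rw [h0, norm_zero] at h1; exact absurd (lt_of_lt_of_le hρi0 h1) (lt_irrefl 0)
    have habs : (0:ℝ) < ‖z‖ := lt_of_lt_of_le hρi0 h1
    rcases le_total 1 ‖z‖ with h | h
    · exact ⟨z, h, h2, rfl⟩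
    · refine ⟨z⁻¹, ?_, ?_, ?_⟩
      · rw [norm_inv]; exact (one_le_inv₀ habs).mpr h
      · rw [norm_inv]; rw [inv_le_comm₀ habs hρ0]; exact h1
      · rw [inv_inv, add_comm]
  have hM0 : 0 ≤ M := by
    refine le_trans (norm_nonneg (g 1)) (hM 1 ⟨1, by simp, by simp [hρ.le], by norm_num⟩)
  -- h and its differentiability
  set h : ℂ → X := fun z => g ((z + z⁻¹) / 2) with hhdef
  have hdiff : ∀ z : ℂ, ρ⁻¹ ≤ ‖z‖ → ‖z‖ ≤ ρ → DifferentiableAt ℂ h z := by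
    intro z h1 h2
    have hz0 : z ≠ 0 := by
      intro h0; rw [h0, norm_zero] at h1; exact absurd (lt_of_lt_of_le hρi0 h1) (lt_irrefl 0)
    have hg' : DifferentiableAt ℂ g ((z + z⁻¹) / 2) :=
      hg.differentiableAt (hU.mem_nhds (hE (mem_E z h1 h2)))
    exact hg'.comp z (((differentiableAt_id.add (differentiableAt_inv hz0)).div_const 2))
  have hbound : ∀ z : ℂ, ρ⁻¹ ≤ ‖z‖ → ‖z‖ ≤ ρ → ‖h z‖ ≤ M := by
    intro z h1 h2; exact hM _ (mem_E z h1 h2)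
  -- the exponential parametrization of the unit circle
  have hexp : ∀ θ : ℝ, (Complex.exp (θ * I) + (Complex.exp (θ * I))⁻¹) / 2
      = ((Real.cos θ : ℂ)) := by
    intro θ
    rw [← Complex.exp_neg, Complex.ofReal_cos, Complex.cos, neg_mul]
  have hcos_mem : ∀ θ : ℝ, ((Real.cos θ : ℂ)) ∈ E := by
    intro θ
    refine ⟨Complex.exp (θ * I), ?_, ?_, (hexp θ).symm⟩
    · simp [Complex.norm_exp]
    · simp [Complex.norm_exp]; exact hρ.le
  have hcont : Continuous fun θ : ℝ => g ((Real.cos θ : ℂ)) := by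
    rw [continuous_iff_continuousAt]
    intro θ
    have hc : Continuous fun θ : ℝ => ((Real.cos θ : ℂ)) :=
      Complex.continuous_ofReal.comp Real.continuous_cos
    exact ContinuousAt.comp (g := g) (f := fun θ : ℝ => ((Real.cos θ : ℂ))) (x := θ)
      ((hg.differentiableAt (hU.mem_nhds (hE (hcos_mem θ)))).continuousAt) hc.continuousAt
  set π' := Real.pi
  -- step 1 : substitution t = cos φ
  have himg : Real.cos '' Set.Ioo 0 π' = Set.Ioo (-1 : ℝ) 1 := by
    ext t
    constructor
    · rintro ⟨φ, ⟨h0, hπ⟩, rfl⟩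
      constructor
      · have := Real.strictAntiOn_cos ⟨h0.le, hπ.le⟩ ⟨Real.pi_pos.le, le_refl _⟩ hπ
        simpa [Real.cos_pi] using this
      · have := Real.strictAntiOn_cos ⟨le_refl _, Real.pi_pos.le⟩ ⟨h0.le, hπ.le⟩ h0
        simpa [Real.cos_zero] using this
    · rintro ⟨h1, h2⟩
      have hlt : Real.arccos t < π' := by
        rcases lt_or_eq_of_le (Real.arccos_le_pi t) with h | h
        · exact h
        · exfalso
          have hc := Real.cos_arccos h1.le h2.le
          rw [h, Real.cos_pi] at hc
          linarith
      exact ⟨Real.arccos t, ⟨Real.arccos_pos.mpr h2, hlt⟩, Real.cos_arccos h1.le h2.le⟩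
  have hsub : (∫ t in Set.Ioo (-1:ℝ) 1,
        (Real.sqrt 2 * Real.cos (n * Real.arccos t) / (π' * Real.sqrt (1 - t ^ 2))) • g (t : ℂ))
      = ∫ φ in Set.Ioo 0 π', (Real.sqrt 2 / π' * Real.cos (n * φ)) • g ((Real.cos φ : ℂ)) := by
    rw [← himg, integral_image_eq_integral_abs_deriv_smul measurableSet_Ioo
      (fun x _ => (Real.hasDerivAt_cos x).hasDerivWithinAt)
      (Real.strictAntiOn_cos.injOn.mono Set.Ioo_subset_Icc_self)]
    refine setIntegral_congr_fun measurableSet_Ioo (fun φ hφ => ?_)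
    have hsin : 0 < Real.sin φ := Real.sin_pos_of_pos_of_lt_pi hφ.1 hφ.2
    have h1 : Real.arccos (Real.cos φ) = φ := Real.arccos_cos hφ.1.le hφ.2.le
    have h2 : Real.sqrt (1 - Real.cos φ ^ 2) = Real.sin φ := by
      have hs : 1 - Real.cos φ ^ 2 = Real.sin φ ^ 2 := by
        have := Real.sin_sq_add_cos_sq φ; linarith
      rw [hs, Real.sqrt_sq hsin.le]
    rw [abs_neg, abs_of_pos hsin, h1, h2, smul_smul]
    congr 1
    have hπ0 : π' ≠ 0 := Real.pi_ne_zero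
    field_simp
  -- pull out the constant
  set J : X := ∫ φ in (0:ℝ)..π', Real.cos (n * φ) • g ((Real.cos φ : ℂ)) with hJdef
  have hJIoo : J = ∫ φ in Set.Ioo 0 π', Real.cos (n * φ) • g ((Real.cos φ : ℂ)) := by
    rw [hJdef, intervalIntegral.integral_of_le Real.pi_pos.le, integral_Ioc_eq_integral_Ioo]
  have hstep2 : (∫ φ in Set.Ioo 0 π',
        (Real.sqrt 2 / π' * Real.cos (n * φ)) • g ((Real.cos φ : ℂ)))
      = (Real.sqrt 2 / π') • J := by
    rw [hJIoo, ← MeasureTheory.integral_smul]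
    simp_rw [smul_smul]
  have hcontF : Continuous fun φ : ℝ => Real.cos (n * φ) • g ((Real.cos φ : ℂ)) :=
    (Real.continuous_cos.comp (continuous_const.mul continuous_id)).smul hcont
  have hInt : ∀ a b : ℝ, IntervalIntegrable (fun φ => Real.cos (n * φ) • g ((Real.cos φ : ℂ)))
      volume a b := fun a b => hcontF.intervalIntegrable a b
  -- symmetry : extend to (0, 2π)
  set K : X := ∫ φ in (0:ℝ)..(2*π'), Real.cos (n * φ) • g ((Real.cos φ : ℂ)) with hKdef
  have hflip : ∀ x : ℝ, Real.cos (n * (2*π' - x)) • g ((Real.cos (2*π' - x) : ℂ))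
      = Real.cos (n * x) • g ((Real.cos x : ℂ)) := by
    intro x
    rw [Real.cos_two_pi_sub, mul_sub, Real.cos_nat_mul_two_pi_sub]
  have hsecond : (∫ φ in π'..(2*π'), Real.cos (n * φ) • g ((Real.cos φ : ℂ))) = J := by
    have hcs := intervalIntegral.integral_comp_sub_left
      (a := (0:ℝ)) (b := π') (fun φ => Real.cos (n * φ) • g ((Real.cos φ : ℂ))) (2*π')
    simp only [hflip, sub_zero] at hcs
    have hb : 2*π' - π' = π' := by ring
    rw [hb] at hcs
    rw [hJdef]
    exact hcs.symm
  have hK2J : K = J + J := by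
    rw [hKdef, ← intervalIntegral.integral_add_adjacent_intervals (hInt 0 π')
      (hInt π' (2*π')), hsecond, hJdef]
  -- the two contour functions
  set f₁ : ℂ → X := fun z => z ^ (n - 1) • h z with hf1def
  set f₂ : ℂ → X := fun z => (z ^ (-(n:ℤ) - 1)) • h z with hf2def
  have hdiff1 : ∀ z : ℂ, ρ⁻¹ ≤ ‖z‖ → ‖z‖ ≤ ρ →
      DifferentiableAt ℂ f₁ z := by
    intro z h1 h2
    simp only [hf1def]
    exact (differentiableAt_pow _).smul (hdiff z h1 h2)
  have hdiff2 : ∀ z : ℂ, ρ⁻¹ ≤ ‖z‖ → ‖z‖ ≤ ρ →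
      DifferentiableAt ℂ f₂ z := by
    intro z h1 h2
    have hz0 : z ≠ 0 := by
      intro h0; rw [h0, norm_zero] at h1; exact absurd (lt_of_lt_of_le hρi0 h1) (lt_irrefl 0)
    simp only [hf2def]
    exact (differentiableAt_zpow.mpr (Or.inl hz0)).smul (hdiff z h1 h2)
  -- pointwise identity on the unit circle
  have hpoint : ∀ θ : ℝ, deriv (circleMap 0 1) θ • (f₁ (circleMap 0 1 θ) + f₂ (circleMap 0 1 θ))
      = (2 * I) • (Real.cos (n * θ) • g ((Real.cos θ : ℂ))) := by
    intro θ
    have he : circleMap 0 1 θ = Complex.exp (θ * I) := by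
      rw [circleMap_zero]; simp
    have he0 : Complex.exp (θ * I) ≠ 0 := Complex.exp_ne_zero _
    have h1 : Complex.exp (θ*I) * Complex.exp (θ*I) ^ (n-1) = Complex.exp (θ*I) ^ n := by
      rw [← pow_succ']
      congr 1
      omega
    have h2 : Complex.exp (θ*I) * Complex.exp (θ*I) ^ (-(n:ℤ)-1)
        = Complex.exp (θ*I) ^ (-(n:ℤ)) := by
      rw [mul_comm, ← zpow_add_one₀ he0]
      congr 1
      ring
    have h3 : Complex.exp (θ*I) ^ n = Complex.exp ((n:ℝ)*θ*I) := by
      rw [← Complex.exp_nat_mul]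
      congr 1
      push_cast
      ring
    have h4 : Complex.exp (θ*I) ^ (-(n:ℤ)) = Complex.exp (-((n:ℝ)*θ*I)) := by
      rw [zpow_neg, zpow_natCast, h3, ← Complex.exp_neg]
    have h5 : ((Real.cos ((n:ℝ)*θ) : ℂ))
        = (Complex.exp ((n:ℝ)*θ*I) + Complex.exp (-((n:ℝ)*θ*I)))/2 := by
      rw [Complex.ofReal_cos, Complex.cos]
      push_cast
      ring_nf
    have key : Complex.exp (θ*I) * I * Complex.exp (θ*I)^(n-1)
        + Complex.exp (θ*I) * I * Complex.exp (θ*I)^(-(n:ℤ)-1)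
        = (2*I) * ((Real.cos ((n:ℝ)*θ) : ℂ)) := by
      calc Complex.exp (θ*I) * I * Complex.exp (θ*I)^(n-1)
            + Complex.exp (θ*I) * I * Complex.exp (θ*I)^(-(n:ℤ)-1)
          = I*(Complex.exp (θ*I) * Complex.exp (θ*I)^(n-1))
            + I*(Complex.exp (θ*I) * Complex.exp (θ*I)^(-(n:ℤ)-1)) := by ring
        _ = I*(Complex.exp ((n:ℝ)*θ*I)) + I*(Complex.exp (-((n:ℝ)*θ*I))) := by
            rw [h1, h2, h3, h4]
        _ = (2*I) * ((Complex.exp ((n:ℝ)*θ*I) + Complex.exp (-((n:ℝ)*θ*I)))/2) := by ring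
        _ = (2*I) * ((Real.cos ((n:ℝ)*θ) : ℂ)) := by rw [← h5]
    rw [deriv_circleMap, he]
    simp only [hf1def, hf2def, hhdef]
    rw [hexp θ, smul_add, smul_smul, smul_smul, ← add_smul, key, mul_smul,
      Complex.coe_smul]
  -- identify the circle integral with K
  have hCI1 : CircleIntegrable f₁ 0 1 := by
    refine ContinuousOn.circleIntegrable zero_le_one (fun z hz => ?_)
    have habs : ‖z‖ = 1 := by
      exact mem_sphere_zero_iff_norm.mp hz
    exact (hdiff1 z (by rw [habs]; exact hρi1) (by rw [habs]; exact hρ.le)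
      ).continuousAt.continuousWithinAt
  have hCI2 : CircleIntegrable f₂ 0 1 := by
    refine ContinuousOn.circleIntegrable zero_le_one (fun z hz => ?_)
    have habs : ‖z‖ = 1 := by
      exact mem_sphere_zero_iff_norm.mp hz
    exact (hdiff2 z (by rw [habs]; exact hρi1) (by rw [habs]; exact hρ.le)
      ).continuousAt.continuousWithinAt
  have hsplit : (∮ z in C(0,1), (f₁ z + f₂ z))
      = (∮ z in C(0,1), f₁ z) + ∮ z in C(0,1), f₂ z := by
    simp only [circleIntegral, smul_add]
    exact intervalIntegral.integral_add hCI1.out hCI2.out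
  have hcircK : (∮ z in C(0,1), (f₁ z + f₂ z)) = (2*I) • K := by
    simp only [circleIntegral]
    simp only [hpoint]
    rw [intervalIntegral.integral_smul, hKdef]
  -- contour deformations
  have hannulus1 : ∀ z : ℂ, z ∈ Metric.closedBall (0:ℂ) 1 \ Metric.ball (0:ℂ) ρ⁻¹ →
      ρ⁻¹ ≤ ‖z‖ ∧ ‖z‖ ≤ ρ := by
    intro z hz
    obtain ⟨hz1, hz2⟩ := hz
    rw [Metric.mem_closedBall, Complex.dist_eq, sub_zero] at hz1
    rw [Metric.mem_ball, Complex.dist_eq, sub_zero, not_lt] at hz2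
    exact ⟨hz2, le_trans hz1 hρ.le⟩
  have hdef1 : (∮ z in C(0,1), f₁ z) = ∮ z in C(0, ρ⁻¹), f₁ z := by
    refine circleIntegral_eq_of_differentiable_on_annulus_off_countable hρi0 hρi1
      Set.countable_empty ?_ ?_
    · intro z hz
      obtain ⟨h1, h2⟩ := hannulus1 z hz
      exact (hdiff1 z h1 h2).continuousAt.continuousWithinAt
    · intro z hz
      obtain ⟨hz', -⟩ := hz
      obtain ⟨hz1, hz2⟩ := hz'
      rw [Metric.mem_ball, Complex.dist_eq, sub_zero] at hz1
      rw [Metric.mem_closedBall, Complex.dist_eq, sub_zero, not_le] at hz2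
      exact hdiff1 z hz2.le (le_trans hz1.le hρ.le)
  have hannulus2 : ∀ z : ℂ, z ∈ Metric.closedBall (0:ℂ) ρ \ Metric.ball (0:ℂ) 1 →
      ρ⁻¹ ≤ ‖z‖ ∧ ‖z‖ ≤ ρ := by
    intro z hz
    obtain ⟨hz1, hz2⟩ := hz
    rw [Metric.mem_closedBall, Complex.dist_eq, sub_zero] at hz1
    rw [Metric.mem_ball, Complex.dist_eq, sub_zero, not_lt] at hz2
    exact ⟨le_trans hρi1 hz2, hz1⟩
  have hdef2 : (∮ z in C(0,ρ), f₂ z) = ∮ z in C(0, 1), f₂ z := by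
    refine circleIntegral_eq_of_differentiable_on_annulus_off_countable one_pos hρ.le
      Set.countable_empty ?_ ?_
    · intro z hz
      obtain ⟨h1, h2⟩ := hannulus2 z hz
      exact (hdiff2 z h1 h2).continuousAt.continuousWithinAt
    · intro z hz
      obtain ⟨hz', -⟩ := hz
      obtain ⟨hz1, hz2⟩ := hz'
      rw [Metric.mem_ball, Complex.dist_eq, sub_zero] at hz1
      rw [Metric.mem_closedBall, Complex.dist_eq, sub_zero, not_le] at hz2
      exact hdiff2 z (le_trans hρi1 hz2.le) hz1.le
  -- bounds on the deformed circles
  have hb1 : ‖∮ z in C(0, ρ⁻¹), f₁ z‖ ≤ 2*π'*ρ⁻¹*(ρ⁻¹^(n-1)*M) := by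
    refine circleIntegral.norm_integral_le_of_norm_le_const hρi0.le (fun z hz => ?_)
    have habs : ‖z‖ = ρ⁻¹ := by
      exact mem_sphere_zero_iff_norm.mp hz
    simp only [hf1def]
    rw [norm_smul, norm_pow, habs]
    refine mul_le_mul_of_nonneg_left ?_ (by positivity)
    exact hbound z habs.ge (by rw [habs]; exact le_trans hρi1 hρ.le)
  have hb2 : ‖∮ z in C(0, ρ), f₂ z‖ ≤ 2*π'*ρ*(ρ^(-(n:ℤ)-1)*M) := by
    refine circleIntegral.norm_integral_le_of_norm_le_const hρ0.le (fun z hz => ?_)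
    have habs : ‖z‖ = ρ := by
      exact mem_sphere_zero_iff_norm.mp hz
    simp only [hf2def]
    rw [norm_smul, norm_zpow, habs]
    refine mul_le_mul_of_nonneg_left ?_ ?_
    · exact hbound z (by rw [habs]; exact le_trans hρi1 hρ.le) habs.le
    · positivity
  -- arithmetic
  have hρn0 : (0:ℝ) < ρ ^ n := pow_pos hρ0 n
  have hpow : ρ ^ n = ρ ^ (n-1) * ρ := by
    rw [← pow_succ]
    congr 1
    omega
  have har1 : 2*π'*ρ⁻¹*(ρ⁻¹^(n-1)*M) = 2*π'*M/ρ^n := by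
    have h1 : ρ ^ (n-1) ≠ 0 := (pow_pos hρ0 _).ne'
    have h2 : (ρ^(n-1)*ρ)⁻¹ = ρ⁻¹ * (ρ^(n-1))⁻¹ := by
      rw [mul_inv, mul_comm]
    rw [inv_pow, hpow, div_eq_mul_inv, h2]
    ring
  have hzpow : ρ ^ (-(n:ℤ)-1) = (ρ^n * ρ)⁻¹ := by
    rw [sub_eq_add_neg, zpow_add₀ hρ0.ne', zpow_neg, zpow_neg, zpow_natCast, zpow_one,
      ← mul_inv]
  have har2 : 2*π'*ρ*(ρ^(-(n:ℤ)-1)*M) = 2*π'*M/ρ^n := by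
    rw [hzpow]
    field_simp
  -- assemble
  have hnormI : ‖(2*I)‖ = 2 := by
    simp
  have hnorm4J : (4:ℝ) * ‖J‖ ≤ 4*π'*M/ρ^n := by
    have h₂ : ‖K‖ = 2*‖J‖ := by
      rw [hK2J, ← two_smul ℝ J, norm_smul, Real.norm_ofNat]
    have h₁ : (4:ℝ) * ‖J‖ = ‖(2*I) • K‖ := by
      rw [norm_smul, hnormI, h₂]
      ring
    calc (4:ℝ) * ‖J‖ = ‖(2*I) • K‖ := h₁
      _ = ‖(∮ z in C(0,1), f₁ z) + ∮ z in C(0,1), f₂ z‖ := by rw [← hsplit, hcircK]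
      _ ≤ ‖∮ z in C(0,1), f₁ z‖ + ‖∮ z in C(0,1), f₂ z‖ := norm_add_le _ _
      _ = ‖∮ z in C(0,ρ⁻¹), f₁ z‖ + ‖∮ z in C(0,ρ), f₂ z‖ := by rw [hdef1, ← hdef2]
      _ ≤ 2*π'*M/ρ^n + 2*π'*M/ρ^n := add_le_add (har1 ▸ hb1) (har2 ▸ hb2)
      _ = 4*π'*M/ρ^n := by ring
  rw [hsub, hstep2, norm_smul, Real.norm_eq_abs, abs_of_pos (by positivity : 0 < Real.sqrt 2 / π')]
  have hJb : ‖J‖ ≤ π'*M/ρ^n := by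
    have h4 : (4:ℝ)*(π'*M/ρ^n) = 4*π'*M/ρ^n := by ring
    linarith
  calc Real.sqrt 2/π' * ‖J‖ ≤ Real.sqrt 2/π' * (π'*M/ρ^n) :=
        mul_le_mul_of_nonneg_left hJb (by positivity)
    _ = Real.sqrt 2 * M / ρ^n := by
        have hπ0 : π' ≠ 0 := Real.pi_ne_zero
        field_simp
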